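/- Derivative identity for the P_n polynomials: in the ring of formal Laurent series ℚ((x)), d/dx [ (n-1)! / (log(1+x))^n ] = -n! / ((1+x) (log(1+x))^(n+1)), and consequently the coefficient of x^(-m-1) in n!/((1+x)(log(1+x))^(n+1)) equals m * (m-1)! * S(n,m) = m! * S(n,m) for every m ≥ 1, n ≥ 1. -/

import Mathlib

open Nat

/-- Stirling numbers of the second kind: number of partitions of an `n`-set into `m`
non-empty blocks, given by the standard recurrence. -/
def stirling : ℕ → ℕ → ℕ
  | 0, 0 => 1
  | 0, _ + 1 => 0
  | _ + 1, 0 => 0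
  | n + 1, m + 1 => (m + 1) * stirling n (m + 1) + stirling n m


/-- The formal power series log(1+x) = ∑_{k≥1} (-1)^(k-1) x^k / k over ℚ. -/
noncomputable def logOnePlus : PowerSeries ℚ :=
  PowerSeries.mk fun k => if k = 0 then 0 else (-1 : ℚ) ^ (k - 1) / k

/-- log(1+x) viewed as a formal Laurent series in ℚ⸨x⸩. -/
noncomputable def logL : LaurentSeries ℚ := (logOnePlus : LaurentSeries ℚ)

/-- x as a Laurent series. -/
noncomputable def xL : LaurentSeries ℚ := ((PowerSeries.X : PowerSeries ℚ) : LaurentSeries ℚ)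

section Aux
open PowerSeries HahnSeries

noncomputable def Ups : PowerSeries ℚ := PowerSeries.mk fun k => (-1:ℚ)^k / (k+1)


lemma logOnePlus_eq : logOnePlus = PowerSeries.X * Ups := by
  ext k
  cases k with
  | zero => simp [logOnePlus, coeff_zero_X_mul]
  | succ k =>
    simp [logOnePlus, Ups, coeff_succ_X_mul, coeff_mk]
    try push_cast
    try ring_nf

lemma constU : constantCoeff Ups = 1 := by
  have : constantCoeff Ups = PowerSeries.coeff 0 Ups := by simp
  rw [this]; simp [Ups]

noncomputable def Gps : PowerSeries ℚ := PowerSeries.mk fun k => (-1:ℚ)^k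

lemma hG : (1 + PowerSeries.X) * Gps = 1 := by
  ext k
  rw [add_mul, one_mul, map_add]
  cases k with
  | zero => simp [Gps, coeff_zero_X_mul]
  | succ k => simp [Gps, coeff_succ_X_mul, coeff_mk, PowerSeries.coeff_one, pow_succ]

lemma hdlog : d⁄dX ℚ logOnePlus = Gps := by
  ext k
  rw [coeff_derivative]
  simp only [logOnePlus, Gps, coeff_mk, Nat.succ_ne_zero, if_false, Nat.succ_sub_one]
  have hk : ((k:ℚ)+1) ≠ 0 := by positivity
  push_cast
  rw [div_mul_cancel₀ _ hk]

lemma h4 : (1 + PowerSeries.X) * (Ups + PowerSeries.X * d⁄dX ℚ Ups) = 1 := by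
  have h : d⁄dX ℚ logOnePlus = Ups + PowerSeries.X * d⁄dX ℚ Ups := by
    rw [logOnePlus_eq, Derivation.leibniz]
    simp [smul_eq_mul]; ring
  rw [← h, hdlog, hG]

noncomputable def Vps (n : ℕ) : PowerSeries ℚ := (Ups^n)⁻¹
noncomputable def Zps (n : ℕ) : PowerSeries ℚ := (1 + PowerSeries.X) * Ups^(n+1)
noncomputable def Wps (n : ℕ) : PowerSeries ℚ := (Zps n)⁻¹

lemma constUpow (n : ℕ) : constantCoeff (Ups^n) = 1 := by rw [map_pow, constU, one_pow]

lemma hV (n : ℕ) : Ups^n * Vps n = 1 :=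
  PowerSeries.mul_inv_cancel _ (by rw [constUpow]; norm_num)

lemma constZ (n : ℕ) : constantCoeff (Zps n) = 1 := by
  rw [Zps, map_mul, map_add, map_one, constantCoeff_X, constUpow, add_zero, one_mul]

lemma hW (n : ℕ) : Zps n * Wps n = 1 :=
  PowerSeries.mul_inv_cancel _ (by rw [constZ]; norm_num)

lemma keyPS (n : ℕ) (hn : 1 ≤ n) :
    PowerSeries.X * d⁄dX ℚ (Vps n) - (n : PowerSeries ℚ) * Vps n
      = -(n : PowerSeries ℚ) * Wps n := by
  obtain ⟨p, rfl⟩ : ∃ p, n = p + 1 := ⟨n - 1, (Nat.succ_pred_eq_of_pos hn).symm⟩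
  have h1 := hV (p+1)
  have h2 : d⁄dX ℚ (Ups^(p+1)) * Vps (p+1) + Ups^(p+1) * d⁄dX ℚ (Vps (p+1)) = 0 := by
    have h := congrArg (d⁄dX ℚ) h1
    rw [Derivation.leibniz, Derivation.map_one_eq_zero] at h
    rw [← h]; simp [smul_eq_mul]; ring
  have h3 : d⁄dX ℚ (Ups^(p+1)) * Ups = ((p+1 : ℕ) : PowerSeries ℚ) * (Ups^(p+1) * d⁄dX ℚ Ups) := by
    rw [Derivation.leibniz_pow]
    simp only [smul_eq_mul, nsmul_eq_mul, Nat.add_sub_cancel]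
    push_cast
    ring_nf
  have step : (PowerSeries.X * d⁄dX ℚ (Vps (p+1)) - ((p+1:ℕ) : PowerSeries ℚ) * Vps (p+1)) * Zps (p+1)
      = -((p+1:ℕ) : PowerSeries ℚ) := by
    rw [Zps, pow_succ]
    push_cast at h3 ⊢
    linear_combination ((1+PowerSeries.X)*PowerSeries.X*Ups) * h2
      + (-(1+PowerSeries.X)*PowerSeries.X*(Vps (p+1))) * h3
      + (-((p:PowerSeries ℚ)+1)*(1+PowerSeries.X)*PowerSeries.X*(d⁄dX ℚ Ups)
         - ((p:PowerSeries ℚ)+1)*(1+PowerSeries.X)*Ups) * h1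
      + (-((p:PowerSeries ℚ)+1)) * h4
  calc PowerSeries.X * d⁄dX ℚ (Vps (p+1)) - ((p+1:ℕ) : PowerSeries ℚ) * Vps (p+1)
      = (PowerSeries.X * d⁄dX ℚ (Vps (p+1)) - ((p+1:ℕ) : PowerSeries ℚ) * Vps (p+1)) * (Zps (p+1) * Wps (p+1)) := by
        rw [hW, mul_one]
    _ = ((PowerSeries.X * d⁄dX ℚ (Vps (p+1)) - ((p+1:ℕ) : PowerSeries ℚ) * Vps (p+1)) * Zps (p+1)) * Wps (p+1) := by
        ring
    _ = -((p+1:ℕ) : PowerSeries ℚ) * Wps (p+1) := by rw [step]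

lemma keyCoeff (n : ℕ) (hn : 1 ≤ n) (j : ℕ) :
    ((j:ℚ) - n) * PowerSeries.coeff j (Vps n) = -(n:ℚ) * PowerSeries.coeff j (Wps n) := by
  have h := congrArg (PowerSeries.coeff j) (keyPS n hn)
  have hc : ((n : ℕ) : PowerSeries ℚ) = PowerSeries.C ((n:ℕ):ℚ) := by
    rw [← map_natCast (PowerSeries.C (R := ℚ))]
  rw [map_sub, hc, neg_mul, map_neg, coeff_C_mul, coeff_C_mul] at h
  cases j with
  | zero =>
    rw [coeff_zero_X_mul] at h
    push_cast at h ⊢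
    linear_combination h
  | succ j =>
    rw [coeff_succ_X_mul, coeff_derivative] at h
    push_cast at h ⊢
    linear_combination h


lemma single_mul_coeff (b : ℤ) (r : ℚ) (f : LaurentSeries ℚ) (k : ℤ) :
    (HahnSeries.single b r * f).coeff k = r * f.coeff (k - b) := by
  have h := HahnSeries.coeff_single_mul_add (r := r) (x := f) (a := k - b) (b := b)
  rwa [sub_add_cancel] at h

lemma natCast_LS (c : ℕ) : ((c : ℕ) : LaurentSeries ℚ) = HahnSeries.single (0:ℤ) ((c:ℕ):ℚ) := by
  rw [← map_natCast (HahnSeries.C : ℚ →+* HahnSeries ℤ ℚ) c]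
  rfl

lemma logLn (n : ℕ) : logL ^ n
    = HahnSeries.single (n:ℤ) 1 * ((Ups^n : PowerSeries ℚ) : LaurentSeries ℚ) := by
  rw [logL, logOnePlus_eq, PowerSeries.coe_mul, PowerSeries.coe_X, mul_pow, single_pow,
    PowerSeries.coe_pow]
  simp

lemma invLogLn (n : ℕ) : (logL^n)⁻¹
    = HahnSeries.single (-(n:ℤ)) 1 * ((Vps n : PowerSeries ℚ) : LaurentSeries ℚ) := by
  apply inv_eq_of_mul_eq_one_right
  rw [logLn, mul_mul_mul_comm, single_mul_single, ← PowerSeries.coe_mul, hV, add_neg_cancel,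
    mul_one, PowerSeries.coe_one, mul_one]
  exact HahnSeries.single_zero_one

lemma invB (n : ℕ) : ((1 + xL) * logL^(n+1))⁻¹
    = HahnSeries.single (-((n:ℤ)+1)) 1 * ((Wps n : PowerSeries ℚ) : LaurentSeries ℚ) := by
  apply inv_eq_of_mul_eq_one_right
  have hx : (1 : LaurentSeries ℚ) + xL = ((1 + PowerSeries.X : PowerSeries ℚ) : LaurentSeries ℚ) := by
    rw [PowerSeries.coe_add, PowerSeries.coe_one]; rfl
  rw [logLn, hx]
  have key : ((1 + PowerSeries.X : PowerSeries ℚ) : LaurentSeries ℚ)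
        * (HahnSeries.single (((n+1:ℕ)):ℤ) 1 * ((Ups^(n+1) : PowerSeries ℚ) : LaurentSeries ℚ))
        * (HahnSeries.single (-((n:ℤ)+1)) 1 * ((Wps n : PowerSeries ℚ) : LaurentSeries ℚ))
      = (HahnSeries.single (((n+1:ℕ)):ℤ) 1 * HahnSeries.single (-((n:ℤ)+1)) 1)
        * (((1 + PowerSeries.X : PowerSeries ℚ) : LaurentSeries ℚ)
           * ((Ups^(n+1) : PowerSeries ℚ) : LaurentSeries ℚ)
           * ((Wps n : PowerSeries ℚ) : LaurentSeries ℚ)) := by ring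
  rw [key, single_mul_single, ← PowerSeries.coe_mul, ← PowerSeries.coe_mul]
  have hZ : (1 + PowerSeries.X) * Ups^(n+1) * Wps n = 1 := by rw [← Zps]; exact hW n
  have hidx : (((n+1:ℕ)):ℤ) + -((n:ℤ)+1) = 0 := by push_cast; ring
  rw [hZ, hidx, PowerSeries.coe_one, mul_one, mul_one]
  exact HahnSeries.single_zero_one

lemma coeffA (n : ℕ) (k : ℤ) :
    (((n-1)! : LaurentSeries ℚ) * (logL^n)⁻¹).coeff k
      = (((n-1)! : ℚ)) * ((Vps n : PowerSeries ℚ) : LaurentSeries ℚ).coeff (k + n) := by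
  rw [invLogLn, natCast_LS, ← mul_assoc, single_mul_single, zero_add, mul_one, single_mul_coeff,
    sub_neg_eq_add]

lemma coeffB (n : ℕ) (k : ℤ) :
    ((n ! : LaurentSeries ℚ) * ((1 + xL) * logL^(n+1))⁻¹).coeff k
      = ((n ! : ℚ)) * ((Wps n : PowerSeries ℚ) : LaurentSeries ℚ).coeff (k + n + 1) := by
  rw [invB, natCast_LS, ← mul_assoc, single_mul_single, zero_add, mul_one, single_mul_coeff]
  ring_nf

lemma part1 (n : ℕ) (hn : 1 ≤ n) (k : ℤ) :
    ((k + 1 : ℤ) : ℚ) * (((n - 1)! : LaurentSeries ℚ) * (logL ^ n)⁻¹).coeff (k + 1) =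
      (-((n ! : LaurentSeries ℚ) * ((1 + xL) * logL ^ (n + 1))⁻¹)).coeff k := by
  rw [HahnSeries.coeff_neg, coeffA, coeffB]
  have hidx : k + 1 + (n:ℤ) = k + (n:ℤ) + 1 := by ring
  rw [hidx]
  rcases lt_or_ge (k + (n:ℤ) + 1) 0 with h | h
  · rw [PowerSeries.coeff_coe, if_pos h, PowerSeries.coeff_coe, if_pos h]
    simp
  · rw [PowerSeries.coeff_coe, if_neg (not_lt.2 h), PowerSeries.coeff_coe, if_neg (not_lt.2 h)]
    set j : ℕ := (k + (n:ℤ) + 1).natAbs with hjdef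
    have hj : (k + (n:ℤ) + 1) = (j:ℤ) := (Int.natAbs_of_nonneg h).symm
    have hc := keyCoeff n hn j
    have hk : ((k + 1 : ℤ) : ℚ) = (j:ℚ) - n := by
      have : (k + 1 : ℤ) = (j:ℤ) - n := by omega
      rw [this]; push_cast; ring
    have hfac : ((n)! : ℚ) = (n:ℚ) * (((n-1))! : ℚ) := by
      exact_mod_cast (Nat.mul_factorial_pred (by omega : n ≠ 0)).symm
    rw [hk, hfac]
    linear_combination (((n-1)! : ℚ)) * hc


lemma onePlusX_ne : (1 : LaurentSeries ℚ) + xL ≠ 0 := by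
  intro h
  have h0 := congrArg (fun f : LaurentSeries ℚ => f.coeff 0) h
  simp only [HahnSeries.coeff_add, HahnSeries.coeff_one, HahnSeries.coeff_zero] at h0
  rw [xL, PowerSeries.coe_X, HahnSeries.coeff_single] at h0
  norm_num at h0

lemma Acoeff (n : ℕ) (hn : 1 ≤ n) : ∀ m : ℕ, 1 ≤ m →
    (((n-1)! : LaurentSeries ℚ) * (logL^n)⁻¹).coeff (-(m:ℤ))
      = (((m-1)! * stirling n m : ℕ) : ℚ) := by
  induction n, hn using Nat.le_induction with
  | base =>
    intro m hm
    rw [coeffA]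
    simp only [Nat.cast_one]
    rcases eq_or_lt_of_le hm with h1 | h2
    · subst h1
      have z : (-((1:ℕ):ℤ) + 1) = 0 := by norm_num
      rw [z]
      have hv : ((Vps 1 : PowerSeries ℚ) : LaurentSeries ℚ).coeff (0:ℤ) = 1 := by
        rw [PowerSeries.coeff_coe, if_neg (by norm_num)]
        have : (0:ℤ).natAbs = 0 := rfl
        rw [this, PowerSeries.coeff_zero_eq_constantCoeff, Vps, PowerSeries.constantCoeff_inv,
          constUpow]
        norm_num
      rw [hv]
      norm_num [stirling]
    · -- 2 ≤ m
      have hneg : (-(m:ℤ) + 1) < 0 := by omega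
      rw [PowerSeries.coeff_coe, if_pos hneg, mul_zero]
      obtain ⟨m', rfl⟩ : ∃ m', m = m' + 2 := ⟨m - 2, by omega⟩
      simp [stirling]
  | succ n hn ih =>
    intro m hm
    have hBn : ∀ k : ℤ, ((n ! : LaurentSeries ℚ) * ((1 + xL) * logL^(n+1))⁻¹).coeff k
        = -(((k+1:ℤ):ℚ) * (((n-1)! : LaurentSeries ℚ) * (logL^n)⁻¹).coeff (k+1)) := by
      intro k
      have h := part1 n hn k
      rw [HahnSeries.coeff_neg] at h
      linarith
    have hAB : (((n+1-1)! : LaurentSeries ℚ) * (logL^(n+1))⁻¹)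
        = (1 + xL) * ((n ! : LaurentSeries ℚ) * ((1 + xL) * logL^(n+1))⁻¹) := by
      rw [Nat.add_sub_cancel]
      rw [show (1 + xL) * ((n ! : LaurentSeries ℚ) * ((1 + xL) * logL^(n+1))⁻¹)
          = (n ! : LaurentSeries ℚ) * ((1 + xL) * ((1 + xL) * logL^(n+1))⁻¹) by ring]
      rw [mul_inv, ← mul_assoc (1+xL), mul_inv_cancel₀ onePlusX_ne, one_mul]
    rw [hAB]
    have hsplit : ((1 + xL) * ((n ! : LaurentSeries ℚ) * ((1 + xL) * logL^(n+1))⁻¹)).coeff (-(m:ℤ))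
        = ((n ! : LaurentSeries ℚ) * ((1 + xL) * logL^(n+1))⁻¹).coeff (-(m:ℤ))
          + ((n ! : LaurentSeries ℚ) * ((1 + xL) * logL^(n+1))⁻¹).coeff (-(m:ℤ)-1) := by
      rw [add_mul, one_mul, HahnSeries.coeff_add, xL, PowerSeries.coe_X, single_mul_coeff, one_mul]
    rw [hsplit, hBn, hBn]
    have e1 : (-(m:ℤ) - 1 + 1) = -(m:ℤ) := by ring
    rw [e1]
    rw [ih m hm]
    obtain ⟨m', rfl⟩ : ∃ m', m = m' + 1 := ⟨m - 1, by omega⟩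
    rcases Nat.eq_zero_or_pos m' with rfl | hm'
    · -- m = 1
      have z1 : (-((0+1:ℕ):ℤ) + 1) = (0:ℤ) := by norm_num
      have hs : stirling (n+1) 1 = stirling n 1 := by
        have h0 : stirling n 0 = 0 := by
          obtain ⟨p, rfl⟩ : ∃ p, n = p + 1 := ⟨n - 1, by omega⟩
          simp [stirling]
        simp [stirling, h0]
      rw [z1]
      norm_num [hs]
    · -- m = m' + 1, m' ≥ 1
      have e3 : (-((m'+1:ℕ):ℤ) + 1) = -((m':ℕ):ℤ) := by push_cast; ring
      rw [e3, ih m' hm']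
      obtain ⟨q, rfl⟩ : ∃ q, m' = q + 1 := ⟨m' - 1, by omega⟩
      have hstir : stirling (n+1) (q+2) = (q+2) * stirling n (q+2) + stirling n (q+1) := by
        simp [stirling]
      push_cast [hstir, Nat.factorial_succ]
      ring

end Aux

theorem stmt_15 (n : ℕ) (hn : 1 ≤ n) :
    (∀ k : ℤ,
      ((k + 1 : ℤ) : ℚ) * (((n - 1)! : LaurentSeries ℚ) * (logL ^ n)⁻¹).coeff (k + 1) =
        (-((n ! : LaurentSeries ℚ) * ((1 + xL) * logL ^ (n + 1))⁻¹)).coeff k) ∧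
    (∀ m : ℕ, 1 ≤ m →
      ((n ! : LaurentSeries ℚ) * ((1 + xL) * logL ^ (n + 1))⁻¹).coeff (-(m : ℤ) - 1) =
        (m ! * stirling n m : ℚ)) := by
  constructor
  · exact part1 n hn
  · intro m hm
    have h := part1 n hn (-(m:ℤ) - 1)
    rw [HahnSeries.coeff_neg] at h
    have e : (-(m:ℤ) - 1 + 1) = -(m:ℤ) := by ring
    rw [e] at h
    rw [Acoeff n hn m hm] at h
    have hfac : ((m)! : ℚ) = (m:ℚ) * (((m-1))! : ℚ) := by
      exact_mod_cast (Nat.mul_factorial_pred (by omega : m ≠ 0)).symm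
    push_cast at h ⊢
    linear_combination h - ((stirling n m : ℚ)) * hfac
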